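/- Suppose ∘ is a bilinear operation on sl₂(ℂ) satisfying the anti-pre-Lie identity and compatibility with the bracket, of root graded form with constants α₁, β₁, γ₁, λ₁ as in h∘e = α₁e, e∘h = (α₁−2)e, h∘f = β₁f, f∘h = (β₁+2)f, e∘f = γ₁h, f∘e = (γ₁−1)h, h∘h = λ₁h, e∘e = f∘f = 0. Then the anti-pre-Lie identity applied to (e, h, h) and (f, h, h) yields (λ₁−α₁)(α₁−2) = 2(α₁−2) and (λ₁−β₁)(β₁+2) = −2(β₁+2), and hence (using α₁ ≠ 2, β₁ ≠ −2) α₁ = λ₁ − 2 and β₁ = λ₁ + 2. -/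

import Mathlib

lemma basis_smul_cancel {A : Type*} [AddCommGroup A] [Module ℂ A]
    (B : Module.Basis (Fin 3) ℂ A) (i : Fin 3) {s t : ℂ} (hst : s • B i = t • B i) : s = t := by
  have := congrArg (fun v => B.repr v i) hst
  simpa using this

/-- For a root graded compatible anti-pre-Lie operation on `sl₂(ℂ)` with
constants `α₁, β₁, γ₁, λ₁`, the anti-pre-Lie identity applied to `(e,h,h)` and `(f,h,h)`
yields `(λ₁−α₁)(α₁−2) = 2(α₁−2)` and `(λ₁−β₁)(β₁+2) = −2(β₁+2)`; hence, using
`α₁ ≠ 2`, `β₁ ≠ −2`, one gets `α₁ = λ₁ − 2` and `β₁ = λ₁ + 2`. -/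
theorem stmt19 {A : Type*} [AddCommGroup A] [Module ℂ A]
    (B : Module.Basis (Fin 3) ℂ A) (e f h : A)
    (he : e = B 0) (hf : f = B 1) (hh : h = B 2)
    (c : A →ₗ[ℂ] A →ₗ[ℂ] A)
    (α₁ β₁ γ₁ lam₁ : ℂ)
    (apl : ∀ x y z : A, c x (c y z) - c y (c x z) = c (c y x - c x y) z)
    (hhe : c h e = α₁ • e) (heh : c e h = (α₁ - 2) • e)
    (hhf : c h f = β₁ • f) (hfh : c f h = (β₁ + 2) • f)
    (hef : c e f = γ₁ • h) (hfe : c f e = (γ₁ - 1) • h)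
    (hhh : c h h = lam₁ • h) (hee : c e e = 0) (hff : c f f = 0) :
    ((lam₁ - α₁) * (α₁ - 2) = 2 * (α₁ - 2) ∧
     (lam₁ - β₁) * (β₁ + 2) = -2 * (β₁ + 2)) ∧
    (α₁ ≠ 2 → β₁ ≠ -2 → α₁ = lam₁ - 2 ∧ β₁ = lam₁ + 2) := by
  have h1 := apl e h h
  simp only [hhh, heh, hhe, map_smul, LinearMap.smul_apply, map_sub, LinearMap.sub_apply,
    smul_smul, ← sub_smul] at h1
  have e1 : (lam₁ - α₁) * (α₁ - 2) = 2 * (α₁ - 2) := by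
    have := basis_smul_cancel B 0 (he ▸ h1); linear_combination this
  have h2 := apl f h h
  simp only [hhh, hfh, hhf, map_smul, LinearMap.smul_apply, map_sub, LinearMap.sub_apply,
    smul_smul, ← sub_smul] at h2
  have e2 : (lam₁ - β₁) * (β₁ + 2) = -2 * (β₁ + 2) := by
    have := basis_smul_cancel B 1 (hf ▸ h2); linear_combination this
  refine ⟨⟨e1, e2⟩, fun ha hb => ?_⟩
  constructor
  · have := mul_right_cancel₀ (sub_ne_zero.mpr ha) (e1.trans rfl)
    linear_combination -this
  · have hb2 : β₁ + 2 ≠ 0 := fun hc => hb (by linear_combination hc)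
    have := mul_right_cancel₀ hb2 e2
    linear_combination -this
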